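/- Let p : ℂ → ℂ be an entire function such that every fiber p^{-1}(w) has cardinality at most k (for some fixed k ∈ ℕ, k ≥ 1). Then p is a polynomial of degree at most k. -/

import Mathlib

open Filter Metric Set Polynomial Bornology
open scoped Topology

private lemma genLiouville : ∀ (n : ℕ) (f : ℂ → ℂ), Differentiable ℂ f →
    ∀ C R : ℝ, (∀ z : ℂ, R ≤ ‖z‖ → ‖f z‖ ≤ C * ‖z‖ ^ n) →
    ∃ q : Polynomial ℂ, (∀ z, f z = q.eval z) ∧ q.natDegree ≤ n := by
  intro n
  induction n with
  | zero =>
    intro f hf C R hb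
    obtain ⟨M, hM⟩ := (isCompact_closedBall (0:ℂ) |R|).exists_bound_of_continuousOn
      hf.continuous.continuousOn
    have hbd : IsBounded (range f) := by
      rw [isBounded_iff_forall_norm_le]
      refine ⟨max M C, ?_⟩
      rintro _ ⟨z, rfl⟩
      rcases le_or_gt ‖z‖ |R| with h | h
      · exact le_max_of_le_left (hM z (by simpa [mem_closedBall, dist_zero_right] using h))
      · have := hb z ((le_abs_self R).trans h.le)
        simpa using le_max_of_le_right (by simpa using this)
    obtain ⟨c, hc⟩ := hf.exists_const_forall_eq_of_bounded hbd
    exact ⟨Polynomial.C c, fun z => by simp [hc z], by simp⟩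
  | succ n ih =>
    intro f hf C R hb
    set g : ℂ → ℂ := dslope f 0 with hgdef
    have hg : Differentiable ℂ g := by
      rw [← differentiableOn_univ]
      exact (Complex.differentiableOn_dslope univ_mem).mpr hf.differentiableOn
    have hgb : ∀ z : ℂ, max R 1 ≤ ‖z‖ → ‖g z‖ ≤ (C + ‖f 0‖) * ‖z‖ ^ n := by
      intro z hz
      have h1 : (1:ℝ) ≤ ‖z‖ := le_trans (le_max_right _ _) hz
      have hz0 : z ≠ 0 := by
        intro h; rw [h] at h1; simp at h1; linarith
      have hR : R ≤ ‖z‖ := le_trans (le_max_left _ _) hz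
      have hfz : ‖f z - f 0‖ ≤ C * ‖z‖ ^ (n+1) + ‖f 0‖ :=
        (norm_sub_le _ _).trans (by have := hb z hR; linarith)
      have hgz : g z = z⁻¹ • (f z - f 0) := by
        rw [hgdef, dslope_of_ne f hz0, slope_def_field]
        rw [sub_zero, smul_eq_mul, div_eq_inv_mul]
      rw [hgz, norm_smul, norm_inv]
      have hzpos : (0:ℝ) < ‖z‖ := lt_of_lt_of_le one_pos h1
      rw [inv_mul_le_iff₀ hzpos]
      have hp1 : (1:ℝ) ≤ ‖z‖ ^ n * ‖z‖ :=
        le_trans (one_le_pow₀ h1) (le_mul_of_one_le_right (by positivity) h1)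
      have hfn : (0:ℝ) ≤ ‖f 0‖ := norm_nonneg _
      calc ‖f z - f 0‖ ≤ C * ‖z‖ ^ (n+1) + ‖f 0‖ := hfz
        _ ≤ ‖z‖ ^ (n+1) * (C + ‖f 0‖) := by
            rw [pow_succ]
            nlinarith [mul_le_mul_of_nonneg_left hp1 hfn]
        _ = ‖z‖ * ((C + ‖f 0‖) * ‖z‖ ^ n) := by ring
    obtain ⟨q, hq, hqd⟩ := ih g hg (C + ‖f 0‖) (max R 1) hgb
    refine ⟨Polynomial.C (f 0) + Polynomial.X * q, fun z => ?_, ?_⟩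
    · rcases eq_or_ne z 0 with rfl | hz0
      · simp
      · simp only [eval_add, eval_C, eval_mul, eval_X]
        rw [← hq z, hgdef, dslope_of_ne f hz0, slope_def_field]
        field_simp
        ring
    · calc (Polynomial.C (f 0) + Polynomial.X * q).natDegree
          ≤ max (Polynomial.C (f 0)).natDegree (Polynomial.X * q).natDegree :=
            natDegree_add_le _ _
        _ ≤ n + 1 := by
            simp only [natDegree_C, max_le_iff]
            have := natDegree_mul_le (p := (Polynomial.X : Polynomial ℂ)) (q := q)
            simp only [natDegree_X] at this
            omega

private lemma degBound (p : ℂ → ℂ) (k : ℕ) (hk : 1 ≤ k)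
    (hfib : ∀ w : ℂ, ∃ s : Finset ℂ, s.card ≤ k ∧ {ζ : ℂ | p ζ = w} ⊆ ↑s)
    (q : Polynomial ℂ) (hq : ∀ z, p z = q.eval z) : q.natDegree ≤ k := by
  by_contra hlt
  push_neg at hlt
  classical
  set T : Finset ℂ := (q.derivative.roots.map (fun a => q.eval a)).toFinset with hT
  obtain ⟨w, hw⟩ := Infinite.exists_notMem_finset T
  set r : Polynomial ℂ := q - Polynomial.C w with hrdef
  have hrd : r.natDegree = q.natDegree := natDegree_sub_C
  have hr0 : r ≠ 0 := by
    intro h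
    rw [h] at hrd
    simp at hrd
    omega
  have hcard : r.roots.card = q.natDegree := by
    rw [← hrd]
    exact (splits_iff_card_roots.mp (IsAlgClosed.splits r))
  have hnodup : r.roots.Nodup := by
    rw [Multiset.nodup_iff_count_le_one]
    intro a
    by_contra hc
    push_neg at hc
    have h2 : 2 ≤ rootMultiplicity a r := by
      rw [← count_roots]; omega
    have hdvd : (Polynomial.X - Polynomial.C a) ^ 2 ∣ r :=
      dvd_trans (pow_dvd_pow _ h2) (pow_rootMultiplicity_dvd r a)
    obtain ⟨t, ht⟩ := hdvd
    have hda : r.derivative.eval a = 0 := by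
      rw [ht]
      simp [derivative_mul, derivative_pow]
    have haroot : q.derivative.eval a = 0 := by
      have : r.derivative = q.derivative := by
        rw [hrdef]; simp
      rwa [this] at hda
    have haq : q.eval a = w := by
      have hra : r.eval a = 0 := by
        rw [ht]; simp
      rw [hrdef] at hra
      simp at hra
      linear_combination hra
    have hder0 : q.derivative ≠ 0 := by
      intro h
      have := natDegree_eq_zero_of_derivative_eq_zero h
      omega
    have : w ∈ T := by
      rw [hT]
      simp only [Multiset.mem_toFinset, Multiset.mem_map]
      exact ⟨a, by rw [mem_roots hder0]; exact haroot, haq⟩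
    exact hw this
  obtain ⟨s, hsk, hsub⟩ := hfib w
  have hsubset : r.roots.toFinset ⊆ s := by
    intro a ha
    apply hsub
    have : r.eval a = 0 := by
      have := (mem_roots hr0).mp (Multiset.mem_toFinset.mp ha)
      exact this
    rw [hrdef] at this
    simp only [eval_sub, eval_C, sub_eq_zero] at this
    simp [Set.mem_setOf_eq, hq a, this]
  have : q.natDegree ≤ s.card := by
    rw [← hcard, ← Multiset.toFinset_card_of_nodup hnodup]
    exact Finset.card_le_card hsubset
  omega

private lemma nonDenseCase (p : ℂ → ℂ) (hp : Differentiable ℂ p) (n : ℕ)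
    (hV : ¬ Dense (p '' {z : ℂ | (n:ℝ) < ‖z‖}))
    (genL : ∀ (m : ℕ) (C R : ℝ), (∀ z : ℂ, R ≤ ‖z‖ → ‖p z‖ ≤ C * ‖z‖ ^ m) →
      ∃ q : Polynomial ℂ, ∀ z, p z = q.eval z) :
    ∃ q : Polynomial ℂ, ∀ z, p z = q.eval z := by
  rw [Metric.dense_iff] at hV
  push_neg at hV
  obtain ⟨w, ε, hε, hEmpty⟩ := hV
  have key : ∀ z : ℂ, (n:ℝ) < ‖z‖ → ε ≤ ‖p z - w‖ := by
    intro z hz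
    by_contra hcon
    push_neg at hcon
    have hmem : p z ∈ ball w ε ∩ p '' {z : ℂ | (n:ℝ) < ‖z‖} :=
      ⟨by rw [mem_ball, dist_eq_norm]; exact hcon, ⟨z, hz, rfl⟩⟩
    rw [hEmpty] at hmem
    exact hmem
  set r : ℝ := ((n:ℝ) + 1)⁻¹ with hrdef
  have hr : 0 < r := by positivity
  have hbig : ∀ ζ : ℂ, ζ ≠ 0 → ‖ζ‖ < r → (n:ℝ) < ‖ζ⁻¹‖ := by
    intro ζ hζ0 hζr
    have hpos : 0 < ‖ζ‖ := norm_pos_iff.mpr hζ0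
    have := inv_strictAnti₀ hpos hζr
    rw [hrdef, inv_inv] at this
    rw [norm_inv]
    linarith
  have hne : ∀ ζ : ℂ, ζ ≠ 0 → ‖ζ‖ < r → p ζ⁻¹ - w ≠ 0 := by
    intro ζ hζ0 hζr h
    have := key _ (hbig ζ hζ0 hζr)
    rw [h] at this
    simp at this
    linarith
  set F : ℂ → ℂ := fun ζ => (p ζ⁻¹ - w)⁻¹ with hFdef
  have hFd : DifferentiableOn ℂ F (ball 0 r \ {0}) := by
    rintro ζ ⟨hb, hz⟩
    have hζ0 : ζ ≠ 0 := by simpa using hz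
    have hζr : ‖ζ‖ < r := by simpa [dist_zero_right] using hb
    apply DifferentiableAt.differentiableWithinAt
    exact (((hp ζ⁻¹).comp ζ (differentiableAt_inv hζ0)).sub_const w).inv (hne ζ hζ0 hζr)
  have hFb : BddAbove (norm ∘ F '' (ball 0 r \ {0})) := by
    refine ⟨ε⁻¹, ?_⟩
    rintro x ⟨ζ, ⟨hb, hz⟩, rfl⟩
    have hζ0 : ζ ≠ 0 := by simpa using hz
    have hζr : ‖ζ‖ < r := by simpa [dist_zero_right] using hb
    simp only [Function.comp_apply, hFdef, norm_inv]
    exact inv_anti₀ hε (key _ (hbig ζ hζ0 hζr))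
  set G : ℂ → ℂ := Function.update F 0 (limUnder (𝓝[≠] (0:ℂ)) F) with hGdef
  have hGd : DifferentiableOn ℂ G (ball 0 r) :=
    Complex.differentiableOn_update_limUnder_of_bddAbove (ball_mem_nhds 0 hr) hFd hFb
  have hGa : AnalyticAt ℂ G 0 := hGd.analyticAt (ball_mem_nhds 0 hr)
  have hGF : ∀ ζ : ℂ, ζ ≠ 0 → G ζ = F ζ := fun ζ h => Function.update_of_ne h _ _
  have hballev : ∀ᶠ ζ in 𝓝 (0:ℂ), ‖ζ‖ < r := by
    filter_upwards [ball_mem_nhds (0:ℂ) hr] with ζ hζ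
    simpa [dist_zero_right] using hζ
  by_cases hG0 : G 0 = 0
  · -- pole at infinity: polynomial growth of order m
    have horder : analyticOrderAt G 0 ≠ ⊤ := by
      intro htop
      have hev := analyticOrderAt_eq_top.mp htop
      have hev' : ∀ᶠ ζ in 𝓝[≠] (0:ℂ), G ζ = 0 ∧ ‖ζ‖ < r :=
        ((hev.and hballev).filter_mono nhdsWithin_le_nhds)
      obtain ⟨ζ, ⟨hζeq, hζr⟩, hζne⟩ := (hev'.and self_mem_nhdsWithin).exists
      have hζ0 : ζ ≠ 0 := hζne
      rw [hGF ζ hζ0, hFdef] at hζeq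
      exact inv_ne_zero (hne ζ hζ0 hζr) hζeq
    set m := (analyticOrderAt G 0).toNat with hmdef
    have hm : analyticOrderAt G 0 = (m : ℕ∞) := (ENat.coe_toNat horder).symm
    obtain ⟨h, hha, hh0, hhev⟩ := hGa.analyticOrderAt_eq_natCast.mp hm
    have hhn : 0 < ‖h 0‖ := norm_pos_iff.mpr hh0
    have hcont : ∀ᶠ ζ in 𝓝 (0:ℂ), ‖h 0‖ / 2 ≤ ‖h ζ‖ := by
      have ht : Filter.Tendsto (fun ζ => ‖h ζ‖) (𝓝 0) (𝓝 ‖h 0‖) :=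
        (hha.continuousAt.norm).tendsto
      exact ht.eventually_const_le (by linarith)
    obtain ⟨δ, hδ, hδ'⟩ := Metric.eventually_nhds_iff.mp ((hhev.and hcont).and hballev)
    apply genL m (‖w‖ + (‖h 0‖ / 2)⁻¹) (max (δ⁻¹ + 1) 1)
    intro z hz
    have h1 : (1:ℝ) ≤ ‖z‖ := le_trans (le_max_right _ _) hz
    have hz0 : z ≠ 0 := by
      intro hzz; rw [hzz] at h1; simp at h1; linarith
    have hδinv : δ⁻¹ < ‖z‖ := by
      have := le_trans (le_max_left _ _) hz; linarith
    have hζδ : ‖z⁻¹‖ < δ := by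
      rw [norm_inv]
      have := inv_strictAnti₀ (by positivity) hδinv
      rwa [inv_inv] at this
    obtain ⟨⟨hGζ, hlb⟩, hζr⟩ := hδ' (show dist z⁻¹ 0 < δ by rw [dist_zero_right]; exact hζδ)
    have hζ0 : z⁻¹ ≠ 0 := inv_ne_zero hz0
    have hGFz : G z⁻¹ = (p z - w)⁻¹ := by rw [hGF _ hζ0, hFdef]; simp
    have hpzw : p z - w ≠ 0 := by
      have := hne z⁻¹ hζ0 hζr; rwa [inv_inv] at this
    -- norms
    have hnorm : ‖p z - w‖⁻¹ = ‖z⁻¹‖ ^ m * ‖h z⁻¹‖ := by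
      rw [← norm_inv, ← hGFz, hGζ]
      simp [norm_smul, norm_pow]
    have hb : ‖z⁻¹‖ ^ m * (‖h 0‖ / 2) ≤ ‖p z - w‖⁻¹ := by
      rw [hnorm]
      exact mul_le_mul_of_nonneg_left hlb (by positivity)
    have hbpos : 0 < ‖z⁻¹‖ ^ m * (‖h 0‖ / 2) := by
      have : 0 < ‖z⁻¹‖ := norm_pos_iff.mpr hζ0
      positivity
    have hfinal : ‖p z - w‖ ≤ (‖z⁻¹‖ ^ m * (‖h 0‖ / 2))⁻¹ := by
      have := inv_anti₀ hbpos hb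
      rwa [inv_inv] at this
    have hrw : (‖z⁻¹‖ ^ m * (‖h 0‖ / 2))⁻¹ = (‖h 0‖ / 2)⁻¹ * ‖z‖ ^ m := by
      rw [norm_inv, mul_inv, inv_pow, inv_inv]
      ring
    have hpm : (1:ℝ) ≤ ‖z‖ ^ m := one_le_pow₀ h1
    calc ‖p z‖ ≤ ‖w‖ + ‖p z - w‖ := norm_le_norm_add_norm_sub' (p z) w
      _ ≤ (‖h 0‖ / 2)⁻¹ * ‖z‖ ^ m + ‖w‖ := by rw [← hrw]; linarith
      _ ≤ (‖w‖ + (‖h 0‖ / 2)⁻¹) * ‖z‖ ^ m := by nlinarith [norm_nonneg w]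
  · -- bounded at infinity
    have hGn : 0 < ‖G 0‖ := norm_pos_iff.mpr hG0
    have hcont : ∀ᶠ ζ in 𝓝 (0:ℂ), ‖G 0‖ / 2 ≤ ‖G ζ‖ := by
      have ht : Filter.Tendsto (fun ζ => ‖G ζ‖) (𝓝 0) (𝓝 ‖G 0‖) :=
        ((hGd.differentiableAt (ball_mem_nhds 0 hr)).continuousAt.norm).tendsto
      exact ht.eventually_const_le (by linarith)
    obtain ⟨δ, hδ, hδ'⟩ := Metric.eventually_nhds_iff.mp (hcont.and hballev)
    apply genL 0 (‖w‖ + (‖G 0‖ / 2)⁻¹) (max (δ⁻¹ + 1) 1)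
    intro z hz
    have h1 : (1:ℝ) ≤ ‖z‖ := le_trans (le_max_right _ _) hz
    have hz0 : z ≠ 0 := by
      intro hzz; rw [hzz] at h1; simp at h1; linarith
    have hδinv : δ⁻¹ < ‖z‖ := by
      have := le_trans (le_max_left _ _) hz; linarith
    have hζδ : ‖z⁻¹‖ < δ := by
      rw [norm_inv]
      have := inv_strictAnti₀ (by positivity) hδinv
      rwa [inv_inv] at this
    obtain ⟨hlb, hζr⟩ := hδ' (show dist z⁻¹ 0 < δ by rw [dist_zero_right]; exact hζδ)
    have hζ0 : z⁻¹ ≠ 0 := inv_ne_zero hz0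
    have hGFz : G z⁻¹ = (p z - w)⁻¹ := by rw [hGF _ hζ0, hFdef]; simp
    have hfinal : ‖p z - w‖ ≤ (‖G 0‖ / 2)⁻¹ := by
      have hb : ‖G 0‖ / 2 ≤ ‖p z - w‖⁻¹ := by rw [← norm_inv, ← hGFz]; exact hlb
      have := inv_anti₀ (by linarith) hb
      rwa [inv_inv] at this
    calc ‖p z‖ ≤ ‖w‖ + ‖p z - w‖ := norm_le_norm_add_norm_sub' (p z) w
      _ ≤ (‖w‖ + (‖G 0‖ / 2)⁻¹) * ‖z‖ ^ 0 := by rw [pow_zero, mul_one]; linarith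

/-- An entire function all of whose fibers have at most `k` points is a
polynomial of degree at most `k`. -/
theorem stmt11 (p : ℂ → ℂ) (hp : Differentiable ℂ p) (k : ℕ) (hk : 1 ≤ k)
    (hfib : ∀ w : ℂ, ∃ s : Finset ℂ, s.card ≤ k ∧ {ζ : ℂ | p ζ = w} ⊆ ↑s) :
    ∃ q : Polynomial ℂ, q.natDegree ≤ k ∧ ∀ z, p z = q.eval z := by
  have hnc : ∀ c : ℂ, ¬ (∀ z, p z = c) := by
    intro c hc
    obtain ⟨s, _, hsub⟩ := hfib c
    have : (Set.univ : Set ℂ).Finite := by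
      apply Set.Finite.subset s.finite_toSet
      intro z _
      exact hsub (hc z)
    exact Set.infinite_univ this
  suffices h : ∃ q : Polynomial ℂ, ∀ z, p z = q.eval z by
    obtain ⟨q, hq⟩ := h
    exact ⟨q, degBound p k hk hfib q hq, hq⟩
  by_cases hdense : ∀ n : ℕ, Dense (p '' {z : ℂ | (n:ℝ) < ‖z‖})
  · exfalso
    have hopen : IsOpenMap p := by
      rw [isOpenMap_iff_nhds_le]
      intro z
      rcases (hp.analyticAt z).eventually_constant_or_nhds_le_map_nhds with h | h
      · exfalso
        apply hnc (p z)
        intro x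
        have := (Complex.analyticOnNhd_univ_iff_differentiable.mpr hp).eq_of_eventuallyEq
          (analyticOnNhd_const (v := p z)) h
        exact congrFun this x
      · exact h
    have hBaire : Dense (⋂ n : ℕ, p '' {z : ℂ | (n:ℝ) < ‖z‖}) :=
      dense_iInter_of_isOpen_nat
        (fun n => hopen _ (isOpen_lt continuous_const continuous_norm)) hdense
    obtain ⟨w, hw⟩ := hBaire.nonempty
    obtain ⟨s, hsk, hsub⟩ := hfib w
    obtain ⟨B, hB⟩ := s.finite_toSet.isBounded.exists_norm_le
    have hwn := Set.mem_iInter.mp hw ⌈B⌉₊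
    obtain ⟨z, hz, hpz⟩ := hwn
    have hzs : z ∈ (s : Set ℂ) := hsub hpz
    have h1 : ‖z‖ ≤ B := hB z hzs
    have h2 : B ≤ (⌈B⌉₊ : ℝ) := Nat.le_ceil B
    simp only [Set.mem_setOf_eq] at hz
    linarith
  · push_neg at hdense
    obtain ⟨n, hV⟩ := hdense
    exact nonDenseCase p hp n hV (fun m C R hbound => by
      obtain ⟨q, hq, _⟩ := genLiouville m p hp C R hbound
      exact ⟨q, hq⟩)
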